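/- Let n ≥ 1, let b₁, b₂ ∈ ℤ^n, and let h₁, h₂ : ℝ^n → ℂ be continuously differentiable and bounded, with bounded and Lipschitz continuous gradients. Then the Weyl quantization operators on ℓ²(ℤ^n, ℂ) satisfy Dirac's condition: ‖(i/ℏ)·(Q_{ℏ,b₁,h₁} Q_{ℏ,b₂,h₂} − Q_{ℏ,b₂,h₂} Q_{ℏ,b₁,h₁}) − Q_{ℏ,b₁+b₂,P}‖ → 0 as ℏ → 0 (operator norm; limit over real ℏ ≠ 0), where P : ℝ^n → ℂ is P(p) := 2πi·((∇h₁(p)·b₂)·h₂(p) − h₁(p)·(∇h₂(p)·b₁)); here e_{b₁+b₂} ⊗ P is the Poisson bracket {e_{b₁} ⊗ h₁, e_{b₂} ⊗ h₂} of the corresponding phase-space functions on T*T^n. -/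

import Mathlib

open Topology ENNReal NNReal

/-- `ℓ²(ℤⁿ, ℂ)`, the Hilbert space `L²(Tⁿ)` in the Fourier basis. -/
noncomputable abbrev HilSp (n : ℕ) := lp (fun _ : Fin n → ℤ => ℂ) 2

section Aux

lemma shiftOp_norm_le {n : ℕ} (T : HilSp n →L[ℂ] HilSp n) (b : Fin n → ℤ)
    (g : (Fin n → ℤ) → ℂ) (hT : ∀ ψ a, (T ψ) a = g a * ψ (a - b))
    {K : ℝ} (hK : 0 ≤ K) (hg : ∀ a, ‖g a‖ ≤ K) : ‖T‖ ≤ K := by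
  refine T.opNorm_le_bound hK fun ψ => ?_
  have h2 : (0:ℝ) < (2:ℝ≥0∞).toReal := by norm_num
  have ht : ((2:ℝ≥0∞)).toReal = (2:ℝ) := by norm_num
  refine lp.norm_le_of_tsum_le h2 (by positivity) ?_
  rw [ht]
  have hsum : Summable (fun a : Fin n → ℤ => ‖(T ψ) a‖ ^ (2:ℝ)) := by
    simpa [ht] using (lp.memℓp (T ψ)).summable h2
  have hψsum : Summable (fun a : Fin n → ℤ => ‖ψ a‖ ^ (2:ℝ)) := by
    simpa [ht] using (lp.memℓp ψ).summable h2
  have hψsum' : Summable (fun a : Fin n → ℤ => ‖ψ (a - b)‖ ^ (2:ℝ)) :=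
    ((Equiv.subRight b).summable_iff.2 hψsum)
  calc ∑' a, ‖(T ψ) a‖ ^ (2:ℝ)
      ≤ ∑' a, K ^ (2:ℝ) * ‖ψ (a - b)‖ ^ (2:ℝ) := by
        refine Summable.tsum_le_tsum (fun a => ?_) hsum (hψsum'.mul_left _)
        rw [hT ψ a, ← Real.mul_rpow hK (norm_nonneg _)]
        exact Real.rpow_le_rpow (norm_nonneg _)
          (by rw [norm_mul]; exact mul_le_mul_of_nonneg_right (hg a) (norm_nonneg _)) (by norm_num)
    _ = K ^ (2:ℝ) * ∑' a, ‖ψ (a - b)‖ ^ (2:ℝ) := tsum_mul_left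
    _ = K ^ (2:ℝ) * ∑' a, ‖ψ a‖ ^ (2:ℝ) := by
        congr 1
        exact ((Equiv.subRight b).tsum_eq (fun a => ‖ψ a‖ ^ (2:ℝ)))
    _ = K ^ (2:ℝ) * ‖ψ‖ ^ (2:ℝ) := by rw [← ht, ← lp.norm_rpow_eq_tsum h2]
    _ = (K * ‖ψ‖) ^ (2:ℝ) := (Real.mul_rpow hK (norm_nonneg _)).symm

variable {E : Type*} [NormedAddCommGroup E] [NormedSpace ℝ E]

lemma mvt_bound (f : E → ℂ) (hf : ContDiff ℝ 1 f) {C : ℝ}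
    (hC : ∀ x, ‖fderiv ℝ f x‖ ≤ C) (x y : E) : ‖f x - f y‖ ≤ C * ‖x - y‖ :=
  Convex.norm_image_sub_le_of_norm_fderiv_le
    (fun _ _ => (hf.differentiable one_ne_zero).differentiableAt)
    (fun z _ => hC z) convex_univ (Set.mem_univ y) (Set.mem_univ x)

lemma taylor_bound (f : E → ℂ) (hf : ContDiff ℝ 1 f) {L : ℝ≥0}
    (hL : LipschitzWith L (fderiv ℝ f)) (p v : E) :
    ‖f (p + v) - f p - fderiv ℝ f p v‖ ≤ L * ‖v‖ ^ 2 := by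
  have hdiff := hf.differentiable one_ne_zero
  set g : E → ℂ := fun x => f x - fderiv ℝ f p x with hg
  have hg' : ∀ x, HasFDerivAt g (fderiv ℝ f x - fderiv ℝ f p) x := fun x =>
    ((hdiff x).hasFDerivAt).sub ((fderiv ℝ f p).hasFDerivAt)
  have key : ‖g (p + v) - g p‖ ≤ (L * ‖v‖) * ‖(p + v) - p‖ := by
    refine Convex.norm_image_sub_le_of_norm_hasFDerivWithin_le
      (fun x _ => (hg' x).hasFDerivWithinAt) (fun x hx => ?_)
      (convex_segment p (p+v)) (left_mem_segment ℝ p (p+v)) (right_mem_segment ℝ p (p+v))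
    rcases hx with ⟨s, t, hs, ht, hst, rfl⟩
    have hlip : ‖fderiv ℝ f (s • p + t • (p + v)) - fderiv ℝ f p‖
        ≤ L * ‖s • p + t • (p + v) - p‖ := by
      simpa [dist_eq_norm] using hL.dist_le_mul (s • p + t • (p + v)) p
    refine hlip.trans ?_
    have h1 : s • p + t • (p + v) - p = t • v := by
      rw [smul_add]
      have : s • p + t • p = p := by rw [← add_smul, hst, one_smul]
      rw [← add_assoc, this]
      abel
    rw [h1, norm_smul]
    have h2 : ‖t‖ ≤ 1 := by rw [Real.norm_eq_abs, abs_of_nonneg ht]; linarith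
    have h3 := mul_le_mul_of_nonneg_right h2 (norm_nonneg v)
    calc (L:ℝ) * (‖t‖ * ‖v‖) ≤ L * (1 * ‖v‖) :=
          mul_le_mul_of_nonneg_left (by simpa using h3) (by positivity)
      _ = L * ‖v‖ := by ring
  have h2 : g (p + v) - g p = f (p + v) - f p - fderiv ℝ f p v := by
    simp only [hg]
    have : (fderiv ℝ f p) (p + v) = fderiv ℝ f p p + fderiv ℝ f p v := map_add _ _ _
    rw [this]; ring
  rw [h2] at key
  refine key.trans ?_
  simp only [add_sub_cancel_left, sq]
  ring_nf
  exact le_rfl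

lemma scalar_est (h₁ h₂ : E → ℂ) (hC₁ : ContDiff ℝ 1 h₁) (hC₂ : ContDiff ℝ 1 h₂)
    {C₁ C₂ D₁ D₂ : ℝ} (hb₁ : ∀ p, ‖h₁ p‖ ≤ C₁) (hb₂ : ∀ p, ‖h₂ p‖ ≤ C₂)
    (hd₁ : ∀ p, ‖fderiv ℝ h₁ p‖ ≤ D₁) (hd₂ : ∀ p, ‖fderiv ℝ h₂ p‖ ≤ D₂)
    {L₁ L₂ : ℝ≥0} (hL₁ : LipschitzWith L₁ (fderiv ℝ h₁)) (hL₂ : LipschitzWith L₂ (fderiv ℝ h₂))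
    (p v₁ v₂ : E) (r : ℝ) (hr : 0 ≤ r) (hv₁ : ‖v₁‖ ≤ r) (hv₂ : ‖v₂‖ ≤ r) :
    ‖h₁ (p + v₂) * h₂ (p - v₁) - h₂ (p + v₁) * h₁ (p - v₂)
      - (2 * fderiv ℝ h₁ p v₂ * h₂ p - 2 * h₁ p * fderiv ℝ h₂ p v₁)‖
      ≤ (2 * L₁ * C₂ + 2 * L₂ * C₁ + 4 * D₁ * D₂) * r ^ 2 := by
  have hC₁0 : (0:ℝ) ≤ C₁ := le_trans (norm_nonneg _) (hb₁ p)
  have hC₂0 : (0:ℝ) ≤ C₂ := le_trans (norm_nonneg _) (hb₂ p)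
  have hD₁0 : (0:ℝ) ≤ D₁ := le_trans (norm_nonneg _) (hd₁ p)
  have hD₂0 : (0:ℝ) ≤ D₂ := le_trans (norm_nonneg _) (hd₂ p)
  set Ap := h₁ (p + v₂); set Am := h₁ (p - v₂)
  set Bp := h₂ (p + v₁); set Bm := h₂ (p - v₁)
  set d₁ : ℂ := fderiv ℝ h₁ p v₂; set d₂ : ℂ := fderiv ℝ h₂ p v₁
  have hdecomp : Ap * Bm - Bp * Am - (2 * d₁ * h₂ p - 2 * h₁ p * d₂)
      = (Ap - Am - 2 * d₁) * Bp + 2 * d₁ * (Bp - h₂ p)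
        + Ap * (Bm - Bp + 2 * d₂) - 2 * (Ap - h₁ p) * d₂ := by ring
  rw [hdecomp]
  have t1p : ‖Ap - h₁ p - d₁‖ ≤ L₁ * r ^ 2 := by
    refine (taylor_bound h₁ hC₁ hL₁ p v₂).trans ?_
    exact mul_le_mul_of_nonneg_left (by nlinarith [norm_nonneg v₂]) (by positivity)
  have t1m : ‖Am - h₁ p + d₁‖ ≤ L₁ * r ^ 2 := by
    have h := taylor_bound h₁ hC₁ hL₁ p (-v₂)
    simp only [← sub_eq_add_neg, map_neg, sub_neg_eq_add, norm_neg] at h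
    exact h.trans (mul_le_mul_of_nonneg_left (by nlinarith [norm_nonneg v₂]) (by positivity))
  have hA : ‖Ap - Am - 2 * d₁‖ ≤ 2 * L₁ * r ^ 2 := by
    have h : Ap - Am - 2 * d₁ = (Ap - h₁ p - d₁) - (Am - h₁ p + d₁) := by ring
    rw [h]
    calc ‖(Ap - h₁ p - d₁) - (Am - h₁ p + d₁)‖ ≤ ‖Ap - h₁ p - d₁‖ + ‖Am - h₁ p + d₁‖ :=
          norm_sub_le _ _
      _ ≤ L₁ * r ^ 2 + L₁ * r ^ 2 := add_le_add t1p t1m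
      _ = 2 * L₁ * r ^ 2 := by ring
  have t2p : ‖Bp - h₂ p - d₂‖ ≤ L₂ * r ^ 2 := by
    refine (taylor_bound h₂ hC₂ hL₂ p v₁).trans ?_
    exact mul_le_mul_of_nonneg_left (by nlinarith [norm_nonneg v₁]) (by positivity)
  have t2m : ‖Bm - h₂ p + d₂‖ ≤ L₂ * r ^ 2 := by
    have h := taylor_bound h₂ hC₂ hL₂ p (-v₁)
    simp only [← sub_eq_add_neg, map_neg, sub_neg_eq_add, norm_neg] at h
    exact h.trans (mul_le_mul_of_nonneg_left (by nlinarith [norm_nonneg v₁]) (by positivity))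
  have hB : ‖Bm - Bp + 2 * d₂‖ ≤ 2 * L₂ * r ^ 2 := by
    have h : Bm - Bp + 2 * d₂ = (Bm - h₂ p + d₂) - (Bp - h₂ p - d₂) := by ring
    rw [h]
    calc ‖(Bm - h₂ p + d₂) - (Bp - h₂ p - d₂)‖ ≤ ‖Bm - h₂ p + d₂‖ + ‖Bp - h₂ p - d₂‖ :=
          norm_sub_le _ _
      _ ≤ L₂ * r ^ 2 + L₂ * r ^ 2 := add_le_add t2m t2p
      _ = 2 * L₂ * r ^ 2 := by ring
  have hd₁b : ‖d₁‖ ≤ D₁ * r :=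
    ((fderiv ℝ h₁ p).le_opNorm v₂).trans
      (mul_le_mul (hd₁ p) hv₂ (norm_nonneg _) hD₁0)
  have hd₂b : ‖d₂‖ ≤ D₂ * r :=
    ((fderiv ℝ h₂ p).le_opNorm v₁).trans
      (mul_le_mul (hd₂ p) hv₁ (norm_nonneg _) hD₂0)
  have hBdiff : ‖Bp - h₂ p‖ ≤ D₂ * r := by
    refine (mvt_bound h₂ hC₂ hd₂ (p + v₁) p).trans ?_
    simp only [add_sub_cancel_left]
    exact mul_le_mul_of_nonneg_left hv₁ hD₂0
  have hAdiff : ‖Ap - h₁ p‖ ≤ D₁ * r := by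
    refine (mvt_bound h₁ hC₁ hd₁ (p + v₂) p).trans ?_
    simp only [add_sub_cancel_left]
    exact mul_le_mul_of_nonneg_left hv₂ hD₁0
  calc ‖(Ap - Am - 2 * d₁) * Bp + 2 * d₁ * (Bp - h₂ p) + Ap * (Bm - Bp + 2 * d₂)
        - 2 * (Ap - h₁ p) * d₂‖
      ≤ ‖(Ap - Am - 2 * d₁) * Bp‖ + ‖2 * d₁ * (Bp - h₂ p)‖ + ‖Ap * (Bm - Bp + 2 * d₂)‖
        + ‖2 * (Ap - h₁ p) * d₂‖ := by
        refine (norm_sub_le _ _).trans ?_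
        gcongr
        exact (norm_add_le _ _).trans (by gcongr; exact norm_add_le _ _)
    _ ≤ (2 * L₁ * r ^ 2) * C₂ + 2 * (D₁ * r) * (D₂ * r) + C₁ * (2 * L₂ * r ^ 2)
        + 2 * (D₁ * r) * (D₂ * r) := by
        gcongr ?_ + ?_ + ?_ + ?_
        · rw [norm_mul]
          exact mul_le_mul hA (hb₂ _) (norm_nonneg _) (by positivity)
        · rw [norm_mul, norm_mul]
          have h2 : ‖(2:ℂ)‖ = 2 := by norm_num
          rw [h2]
          exact mul_le_mul (mul_le_mul_of_nonneg_left hd₁b (by norm_num)) hBdiff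
            (norm_nonneg _) (by positivity)
        · rw [norm_mul]
          exact mul_le_mul (hb₁ _) hB (norm_nonneg _) hC₁0
        · rw [norm_mul, norm_mul]
          have h2 : ‖(2:ℂ)‖ = 2 := by norm_num
          rw [h2]
          exact mul_le_mul (mul_le_mul_of_nonneg_left hAdiff (by norm_num)) hd₂b
            (norm_nonneg _) (by positivity)
    _ = (2 * L₁ * C₂ + 2 * L₂ * C₁ + 4 * D₁ * D₂) * r ^ 2 := by ring

end Aux

/-- Dirac's condition for Weyl quantization on the torus:  for `C¹`, bounded
`h₁, h₂ : ℝⁿ → ℂ` with bounded, Lipschitz gradients and `b₁, b₂ ∈ ℤⁿ`, the Weyl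
quantization operators (specified through their defining pointwise formulas
`(Q_{ℏ,b,h}ψ)(a) = h(2πℏ(a − b/2))·ψ(a − b)`) satisfy
`‖(i/ℏ)(Q_{ℏ,b₁,h₁}Q_{ℏ,b₂,h₂} − Q_{ℏ,b₂,h₂}Q_{ℏ,b₁,h₁}) − Q_{ℏ,b₁+b₂,P}‖ → 0` as
`ℏ → 0` over `ℝ \ {0}`, where
`P(p) = 2πi·((∇h₁(p)·b₂)·h₂(p) − h₁(p)·(∇h₂(p)·b₁))`. -/
theorem stmt16 (n : ℕ) (hn : 1 ≤ n) (b₁ b₂ : Fin n → ℤ)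
    (h₁ h₂ : (Fin n → ℝ) → ℂ)
    (hC₁ : ContDiff ℝ 1 h₁) (hC₂ : ContDiff ℝ 1 h₂)
    (hbd₁ : ∃ C : ℝ, ∀ p, ‖h₁ p‖ ≤ C) (hbd₂ : ∃ C : ℝ, ∀ p, ‖h₂ p‖ ≤ C)
    (hdbd₁ : ∃ C : ℝ, ∀ p, ‖fderiv ℝ h₁ p‖ ≤ C) (hdbd₂ : ∃ C : ℝ, ∀ p, ‖fderiv ℝ h₂ p‖ ≤ C)
    (hdLip₁ : ∃ L : NNReal, LipschitzWith L (fderiv ℝ h₁))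
    (hdLip₂ : ∃ L : NNReal, LipschitzWith L (fderiv ℝ h₂))
    (Q₁ Q₂ QP : ℝ → HilSp n →L[ℂ] HilSp n)
    (hQ₁ : ∀ (hbar : ℝ) (ψ : HilSp n) (a : Fin n → ℤ),
      (Q₁ hbar ψ) a =
        h₁ (fun i => 2 * Real.pi * hbar * ((a i : ℝ) - (b₁ i : ℝ) / 2)) * ψ (a - b₁))
    (hQ₂ : ∀ (hbar : ℝ) (ψ : HilSp n) (a : Fin n → ℤ),
      (Q₂ hbar ψ) a =
        h₂ (fun i => 2 * Real.pi * hbar * ((a i : ℝ) - (b₂ i : ℝ) / 2)) * ψ (a - b₂))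
    (hQP : ∀ (hbar : ℝ) (ψ : HilSp n) (a : Fin n → ℤ),
      (QP hbar ψ) a =
        (2 * Real.pi * Complex.I *
          (fderiv ℝ h₁ (fun i => 2 * Real.pi * hbar * ((a i : ℝ) - ((b₁ i : ℝ) + (b₂ i : ℝ)) / 2))
              (fun i => (b₂ i : ℝ)) *
            h₂ (fun i => 2 * Real.pi * hbar * ((a i : ℝ) - ((b₁ i : ℝ) + (b₂ i : ℝ)) / 2)) -
          h₁ (fun i => 2 * Real.pi * hbar * ((a i : ℝ) - ((b₁ i : ℝ) + (b₂ i : ℝ)) / 2)) *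
            fderiv ℝ h₂ (fun i => 2 * Real.pi * hbar * ((a i : ℝ) - ((b₁ i : ℝ) + (b₂ i : ℝ)) / 2))
              (fun i => (b₁ i : ℝ)))) *
        ψ (a - (b₁ + b₂))) :
    Filter.Tendsto (fun hbar : ℝ =>
        ‖(Complex.I / (hbar : ℂ)) • ((Q₁ hbar).comp (Q₂ hbar) - (Q₂ hbar).comp (Q₁ hbar)) -
          QP hbar‖)
      (𝓝[≠] (0 : ℝ)) (𝓝 0) := by
  obtain ⟨C₁, hb₁⟩ := hbd₁
  obtain ⟨C₂, hb₂⟩ := hbd₂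
  obtain ⟨D₁, hd₁⟩ := hdbd₁
  obtain ⟨D₂, hd₂⟩ := hdbd₂
  obtain ⟨L₁, hL₁⟩ := hdLip₁
  obtain ⟨L₂, hL₂⟩ := hdLip₂
  have hC₁0 : (0:ℝ) ≤ C₁ := le_trans (norm_nonneg _) (hb₁ 0)
  have hC₂0 : (0:ℝ) ≤ C₂ := le_trans (norm_nonneg _) (hb₂ 0)
  have hD₁0 : (0:ℝ) ≤ D₁ := le_trans (norm_nonneg _) (hd₁ 0)
  have hD₂0 : (0:ℝ) ≤ D₂ := le_trans (norm_nonneg _) (hd₂ 0)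
  set Bv₁ : Fin n → ℝ := fun i => (b₁ i : ℝ) with hBv₁
  set Bv₂ : Fin n → ℝ := fun i => (b₂ i : ℝ) with hBv₂
  set M : ℝ := 2 * L₁ * C₂ + 2 * L₂ * C₁ + 4 * D₁ * D₂ with hM
  set R : ℝ := ‖Bv₁‖ + ‖Bv₂‖ with hR
  set K : ℝ := M * (Real.pi ^ 2 * R ^ 2) with hKdef
  have hM0 : 0 ≤ M := by
    have l1 : (0:ℝ) ≤ (L₁ : ℝ) := L₁.coe_nonneg
    have l2 : (0:ℝ) ≤ (L₂ : ℝ) := L₂.coe_nonneg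
    have := mul_nonneg (mul_nonneg (by norm_num : (0:ℝ) ≤ 2) l1) hC₂0
    have := mul_nonneg (mul_nonneg (by norm_num : (0:ℝ) ≤ 2) l2) hC₁0
    have := mul_nonneg (mul_nonneg (by norm_num : (0:ℝ) ≤ 4) hD₁0) hD₂0
    rw [hM]; linarith
  have hK0 : 0 ≤ K := by
    have : (0:ℝ) ≤ Real.pi ^ 2 * R ^ 2 := by positivity
    exact mul_nonneg hM0 this
  -- the key uniform bound
  have key : ∀ hbar : ℝ, hbar ≠ 0 →
      ‖(Complex.I / (hbar : ℂ)) • ((Q₁ hbar).comp (Q₂ hbar) - (Q₂ hbar).comp (Q₁ hbar)) -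
        QP hbar‖ ≤ K * |hbar| := by
    intro ℏ hℏ
    set g : (Fin n → ℤ) → ℂ := fun a =>
      Complex.I / (ℏ : ℂ) *
        (h₁ (fun i => 2 * Real.pi * ℏ * ((a i : ℝ) - (b₁ i : ℝ) / 2)) *
            h₂ (fun i => 2 * Real.pi * ℏ * (((a - b₁) i : ℝ) - (b₂ i : ℝ) / 2)) -
          h₂ (fun i => 2 * Real.pi * ℏ * ((a i : ℝ) - (b₂ i : ℝ) / 2)) *
            h₁ (fun i => 2 * Real.pi * ℏ * (((a - b₂) i : ℝ) - (b₁ i : ℝ) / 2))) -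
      2 * Real.pi * Complex.I *
        (fderiv ℝ h₁ (fun i => 2 * Real.pi * ℏ * ((a i : ℝ) - ((b₁ i : ℝ) + (b₂ i : ℝ)) / 2))
            (fun i => (b₂ i : ℝ)) *
          h₂ (fun i => 2 * Real.pi * ℏ * ((a i : ℝ) - ((b₁ i : ℝ) + (b₂ i : ℝ)) / 2)) -
        h₁ (fun i => 2 * Real.pi * ℏ * ((a i : ℝ) - ((b₁ i : ℝ) + (b₂ i : ℝ)) / 2)) *
          fderiv ℝ h₂ (fun i => 2 * Real.pi * ℏ * ((a i : ℝ) - ((b₁ i : ℝ) + (b₂ i : ℝ)) / 2))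
            (fun i => (b₁ i : ℝ))) with hgdef
    have hT : ∀ (ψ : HilSp n) (a : Fin n → ℤ),
        (((Complex.I / (ℏ : ℂ)) •
            ((Q₁ ℏ).comp (Q₂ ℏ) - (Q₂ ℏ).comp (Q₁ ℏ)) - QP ℏ) ψ) a
          = g a * ψ (a - (b₁ + b₂)) := by
      intro ψ a
      have e1 := hQ₁ ℏ (Q₂ ℏ ψ) a
      have e2 := hQ₂ ℏ ψ (a - b₁)
      have e3 := hQ₂ ℏ (Q₁ ℏ ψ) a
      have e4 := hQ₁ ℏ ψ (a - b₂)
      have e5 := hQP ℏ ψ a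
      rw [sub_sub] at e2
      rw [sub_sub, add_comm b₂ b₁] at e4
      simp only [ContinuousLinearMap.sub_apply, ContinuousLinearMap.smul_apply,
        ContinuousLinearMap.comp_apply, lp.coeFn_sub, lp.coeFn_smul, Pi.sub_apply,
        Pi.smul_apply, smul_eq_mul]
      rw [e1, e3, e2, e4, e5, hgdef]
      ring
    refine shiftOp_norm_le _ (b₁ + b₂) g hT
      (mul_nonneg hK0 (abs_nonneg _)) (fun a => ?_)
    -- pointwise estimate
    set p : Fin n → ℝ := fun i => 2 * Real.pi * ℏ * ((a i : ℝ) - ((b₁ i : ℝ) + (b₂ i : ℝ)) / 2)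
      with hp
    set v₁ : Fin n → ℝ := (Real.pi * ℏ) • Bv₁ with hv₁def
    set v₂ : Fin n → ℝ := (Real.pi * ℏ) • Bv₂ with hv₂def
    have hX₁ : (fun i => 2 * Real.pi * ℏ * ((a i : ℝ) - (b₁ i : ℝ) / 2)) = p + v₂ := by
      funext i
      simp only [hp, hv₂def, hBv₂, Pi.add_apply, Pi.smul_apply, smul_eq_mul]
      ring
    have hX₂ : (fun i => 2 * Real.pi * ℏ * (((a - b₁) i : ℝ) - (b₂ i : ℝ) / 2)) = p - v₁ := by
      funext i
      simp only [hp, hv₁def, hBv₁, Pi.sub_apply, Pi.smul_apply, smul_eq_mul, Int.cast_sub]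
      ring
    have hX₃ : (fun i => 2 * Real.pi * ℏ * ((a i : ℝ) - (b₂ i : ℝ) / 2)) = p + v₁ := by
      funext i
      simp only [hp, hv₁def, hBv₁, Pi.add_apply, Pi.smul_apply, smul_eq_mul]
      ring
    have hX₄ : (fun i => 2 * Real.pi * ℏ * (((a - b₂) i : ℝ) - (b₁ i : ℝ) / 2)) = p - v₂ := by
      funext i
      simp only [hp, hv₂def, hBv₂, Pi.sub_apply, Pi.smul_apply, smul_eq_mul, Int.cast_sub]
      ring
    have hf₁ : (fderiv ℝ h₁ p) v₂ = ((Real.pi * ℏ : ℝ) : ℂ) * (fderiv ℝ h₁ p Bv₂) := by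
      rw [hv₂def, map_smul, Complex.real_smul]
    have hf₂ : (fderiv ℝ h₂ p) v₁ = ((Real.pi * ℏ : ℝ) : ℂ) * (fderiv ℝ h₂ p Bv₁) := by
      rw [hv₁def, map_smul, Complex.real_smul]
    have hgid : g a = Complex.I / (ℏ : ℂ) *
        (h₁ (p + v₂) * h₂ (p - v₁) - h₂ (p + v₁) * h₁ (p - v₂)
          - (2 * fderiv ℝ h₁ p v₂ * h₂ p - 2 * h₁ p * fderiv ℝ h₂ p v₁)) := by
      rw [hgdef]
      simp only [hX₁, hX₂, hX₃, hX₄, ← hp, hf₁, hf₂]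
      have hBv₂eq : (fun i => ((b₂ i : ℝ))) = Bv₂ := rfl
      have hBv₁eq : (fun i => ((b₁ i : ℝ))) = Bv₁ := rfl
      rw [hBv₂eq, hBv₁eq]
      have hℏc : (ℏ : ℂ) ≠ 0 := Complex.ofReal_ne_zero.mpr hℏ
      push_cast
      field_simp
    rw [hgid, norm_mul]
    have hnormI : ‖Complex.I / (ℏ : ℂ)‖ = 1 / |ℏ| := by
      rw [norm_div, Complex.norm_I, Complex.norm_real, Real.norm_eq_abs]
    rw [hnormI]
    have hrle : ‖v₁‖ ≤ Real.pi * |ℏ| * R ∧ ‖v₂‖ ≤ Real.pi * |ℏ| * R := by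
      constructor
      · rw [hv₁def, norm_smul, Real.norm_eq_abs, abs_mul,
          abs_of_nonneg Real.pi_pos.le]
        have : ‖Bv₁‖ ≤ R := by rw [hR]; linarith [norm_nonneg Bv₂]
        calc Real.pi * |ℏ| * ‖Bv₁‖ ≤ Real.pi * |ℏ| * R := by
              exact mul_le_mul_of_nonneg_left this (by positivity)
          _ = Real.pi * |ℏ| * R := rfl
      · rw [hv₂def, norm_smul, Real.norm_eq_abs, abs_mul,
          abs_of_nonneg Real.pi_pos.le]
        have : ‖Bv₂‖ ≤ R := by rw [hR]; linarith [norm_nonneg Bv₁]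
        exact mul_le_mul_of_nonneg_left this (by positivity)
    have hest := scalar_est h₁ h₂ hC₁ hC₂ hb₁ hb₂ hd₁ hd₂ hL₁ hL₂ p v₁ v₂
      (Real.pi * |ℏ| * R) (by positivity) hrle.1 hrle.2
    calc 1 / |ℏ| * ‖h₁ (p + v₂) * h₂ (p - v₁) - h₂ (p + v₁) * h₁ (p - v₂)
          - (2 * fderiv ℝ h₁ p v₂ * h₂ p - 2 * h₁ p * fderiv ℝ h₂ p v₁)‖
        ≤ 1 / |ℏ| * (M * (Real.pi * |ℏ| * R) ^ 2) := by
          exact mul_le_mul_of_nonneg_left hest (by positivity)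
      _ = K * |ℏ| := by
          rw [hKdef]
          have hℏ0 : |ℏ| ≠ 0 := abs_ne_zero.mpr hℏ
          field_simp
  -- squeeze
  have hub : ∀ᶠ ℏ : ℝ in (𝓝[≠] (0:ℝ)),
      ‖(Complex.I / ((ℏ : ℝ) : ℂ)) • ((Q₁ ℏ).comp (Q₂ ℏ) - (Q₂ ℏ).comp (Q₁ ℏ)) - QP ℏ‖ ≤ K * |ℏ| := by
    filter_upwards [self_mem_nhdsWithin] with ℏ hℏ
    exact key ℏ (by simpa using hℏ)
  have hlb : ∀ᶠ ℏ : ℝ in (𝓝[≠] (0:ℝ)),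
      (0:ℝ) ≤ ‖(Complex.I / ((ℏ : ℝ) : ℂ)) • ((Q₁ ℏ).comp (Q₂ ℏ) - (Q₂ ℏ).comp (Q₁ ℏ)) - QP ℏ‖ :=
    Filter.Eventually.of_forall (fun _ => norm_nonneg _)
  have hg0 : Filter.Tendsto (fun ℏ : ℝ => K * |ℏ|) (𝓝[≠] (0:ℝ)) (𝓝 0) := by
    have h : Filter.Tendsto (fun ℏ : ℝ => K * |ℏ|) (𝓝 0) (𝓝 (K * |0|)) :=
      (continuous_const.mul continuous_abs).tendsto 0
    simpa using h.mono_left nhdsWithin_le_nhds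
  exact squeeze_zero' hlb hub hg0
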